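/- For every J_M > 0 and R > 0 there is at most one pair (h*, μ) ∈ (0,∞) × (0,∞) satisfying simultaneously Φ(h*, μ) = J_M/σ_N² and Ψ(h*, μ) = R. -/

import Mathlib

open MeasureTheory Set

/-- `Φ(h*, μ)`: the normalized jamming power of the optimal maximin intra-frame
allocation with threshold `h*` and multiplier `μ`. -/
noncomputable def Phi (p : ℝ → ℝ) (hstar μ : ℝ) : ℝ :=
  ∫ h in Ioi hstar, (h * (1 + μ * hstar) / (hstar * (1 + μ * h)) - 1) * p h

/-- `Ψ(h*, μ)`: the rate achieved by the optimal maximin intra-frame allocation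
with threshold `h*` and multiplier `μ`. -/
noncomputable def Psi (p : ℝ → ℝ) (hstar μ : ℝ) : ℝ :=
  (∫ h in Ioo (hstar / (1 + μ * hstar)) hstar, Real.log (h * (1 + μ * hstar) / hstar) * p h)
    + ∫ h in Ioi hstar, Real.log (1 + μ * h) * p h

/-- integrand of Phi, extended by zero to all of `(0,∞)`. -/
noncomputable def Fint (hs μ h : ℝ) : ℝ := max 0 (h - hs) / (hs * (1 + μ * h))

/-- inner algebraic expression whose log (clipped at 1) is the Psi integrand. -/
noncomputable def Gin (hs μ h : ℝ) : ℝ := max 1 (min (1 + μ * h) (h * (1 + μ * hs) / hs))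

noncomputable def Gint (hs μ h : ℝ) : ℝ := Real.log (Gin hs μ h)

lemma Gin_one_le (hs μ h : ℝ) : 1 ≤ Gin hs μ h := le_max_left _ _
lemma Gin_pos (hs μ h : ℝ) : 0 < Gin hs μ h := lt_of_lt_of_le one_pos (Gin_one_le hs μ h)
lemma Gint_nonneg (hs μ h : ℝ) : 0 ≤ Gint hs μ h := Real.log_nonneg (Gin_one_le hs μ h)

lemma Fint_nonneg (hs μ h : ℝ) (hhs : 0 < hs) (hμ : 0 < μ) (hh : 0 < h) :
    0 ≤ Fint hs μ h := by
  apply div_nonneg (le_max_left _ _)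
  positivity

lemma Fint_le (hs μ h : ℝ) (hhs : 0 < hs) (hμ : 0 < μ) (hh : 0 < h) :
    Fint hs μ h ≤ 1 / (hs * μ) := by
  unfold Fint
  rw [div_le_div_iff₀ (by positivity) (by positivity)]
  rcases le_total (h - hs) 0 with hc | hc
  · rw [max_eq_left hc]; nlinarith [mul_pos hhs (mul_pos hμ hh)]
  · rw [max_eq_right hc]; nlinarith [mul_pos hhs (mul_pos hμ hhs)]

lemma Gint_le (hs μ h : ℝ) (hhs : 0 < hs) (hμ : 0 < μ) (hh : 0 < h) :
    Gint hs μ h ≤ μ * h := by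
  have h1 : Gin hs μ h ≤ 1 + μ * h := by
    apply max_le (by nlinarith) (min_le_left _ _)
  calc Gint hs μ h ≤ Real.log (1 + μ * h) := Real.log_le_log (Gin_pos hs μ h) h1
    _ ≤ (1 + μ * h) - 1 := Real.log_le_sub_one_of_pos (by nlinarith)
    _ = μ * h := by ring

lemma Gin_cont (hs μ : ℝ) (hhs : 0 < hs) : Continuous (Gin hs μ) := by
  apply Continuous.max continuous_const
  apply Continuous.min (by continuity)
  exact (continuous_id.mul continuous_const).div_const hs

lemma Fint_integrable (p : ℝ → ℝ) (hp_cont : ContinuousOn p (Ioi 0))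
    (hp_pos : ∀ h, 0 < h → 0 < p h) (hp_int : IntegrableOn p (Ioi (0 : ℝ)))
    (hs μ : ℝ) (hhs : 0 < hs) (hμ : 0 < μ) :
    IntegrableOn (fun h => Fint hs μ h * p h) (Ioi 0) := by
  have hmeas : AEStronglyMeasurable (fun h => Fint hs μ h * p h)
      (volume.restrict (Ioi 0)) := by
    apply ContinuousOn.aestronglyMeasurable _ measurableSet_Ioi
    apply ContinuousOn.mul _ hp_cont
    apply ContinuousOn.div (by fun_prop) (by fun_prop)
    intro h hh
    have : (0:ℝ) < 1 + μ * h := by nlinarith [mem_Ioi.mp hh]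
    positivity
  apply Integrable.mono' (hp_int.const_mul (1 / (hs * μ))) hmeas
  filter_upwards [ae_restrict_mem measurableSet_Ioi] with h hh
  have hh0 : (0:ℝ) < h := hh
  rw [Real.norm_eq_abs, abs_of_nonneg (mul_nonneg (Fint_nonneg hs μ h hhs hμ hh0) (hp_pos h hh0).le)]
  exact mul_le_mul_of_nonneg_right (Fint_le hs μ h hhs hμ hh0) (hp_pos h hh0).le

lemma Gint_integrable (p : ℝ → ℝ) (hp_cont : ContinuousOn p (Ioi 0))
    (hp_pos : ∀ h, 0 < h → 0 < p h)
    (hp_mean : IntegrableOn (fun h => h * p h) (Ioi (0 : ℝ)))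
    (hs μ : ℝ) (hhs : 0 < hs) (hμ : 0 < μ) :
    IntegrableOn (fun h => Gint hs μ h * p h) (Ioi 0) := by
  have hmeas : AEStronglyMeasurable (fun h => Gint hs μ h * p h)
      (volume.restrict (Ioi 0)) := by
    apply ContinuousOn.aestronglyMeasurable _ measurableSet_Ioi
    apply ContinuousOn.mul _ hp_cont
    apply ContinuousOn.log (Gin_cont hs μ hhs).continuousOn
    intro h _
    exact (Gin_pos hs μ h).ne'
  have hbd : Integrable (fun h => μ * (h * p h)) (volume.restrict (Ioi 0)) :=
    hp_mean.const_mul μ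
  apply Integrable.mono' hbd hmeas
  filter_upwards [ae_restrict_mem measurableSet_Ioi] with h hh
  have hh0 : (0:ℝ) < h := hh
  rw [Real.norm_eq_abs, abs_of_nonneg (mul_nonneg (Gint_nonneg hs μ h) (hp_pos h hh0).le)]
  calc Gint hs μ h * p h ≤ (μ * h) * p h :=
        mul_le_mul_of_nonneg_right (Gint_le hs μ h hhs hμ hh0) (hp_pos h hh0).le
    _ = μ * (h * p h) := by ring

lemma phi_eq (p : ℝ → ℝ) (hp_cont : ContinuousOn p (Ioi 0))
    (hp_pos : ∀ h, 0 < h → 0 < p h) (hp_int : IntegrableOn p (Ioi (0 : ℝ)))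
    (hs μ : ℝ) (hhs : 0 < hs) (hμ : 0 < μ) :
    Phi p hs μ = ∫ h in Ioi (0:ℝ), Fint hs μ h * p h := by
  have h1 : Phi p hs μ = ∫ h in Ioi hs, Fint hs μ h * p h := by
    apply setIntegral_congr_fun measurableSet_Ioi
    intro h hh
    have hh' : hs < h := hh
    have hd : (0:ℝ) < 1 + μ * h := by nlinarith
    have : Fint hs μ h = h * (1 + μ * hs) / (hs * (1 + μ * h)) - 1 := by
      unfold Fint
      rw [max_eq_right (by linarith)]
      rw [div_sub_one (mul_pos hhs hd).ne']
      congr 1; ring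
    simp only []
    rw [this]
  rw [h1]
  exact (setIntegral_eq_of_subset_of_forall_diff_eq_zero measurableSet_Ioi
    (Ioi_subset_Ioi hhs.le) (by
      intro h hmem
      obtain ⟨hh0, hnot⟩ := hmem
      have : h ≤ hs := by simpa using hnot
      have : max 0 (h - hs) = 0 := max_eq_left (by linarith)
      simp [Fint, this])).symm

lemma Gin_eq_right (hs μ h : ℝ) (hhs : 0 < hs) (hμ : 0 < μ) (hle : hs ≤ h) :
    Gin hs μ h = 1 + μ * h := by
  have hh0 : 0 < h := lt_of_lt_of_le hhs hle
  have hmin : min (1 + μ * h) (h * (1 + μ * hs) / hs) = 1 + μ * h := by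
    apply min_eq_left
    rw [le_div_iff₀ hhs]
    nlinarith
  rw [Gin, hmin, max_eq_right (by nlinarith)]

lemma Gin_eq_mid (hs μ h : ℝ) (hhs : 0 < hs) (hμ : 0 < μ)
    (h1 : hs / (1 + μ * hs) ≤ h) (h2 : h ≤ hs) :
    Gin hs μ h = h * (1 + μ * hs) / hs := by
  have hd : (0:ℝ) < 1 + μ * hs := by nlinarith
  have hh0 : 0 < h := lt_of_lt_of_le (by positivity) h1
  have hmin : min (1 + μ * h) (h * (1 + μ * hs) / hs) = h * (1 + μ * hs) / hs := by
    apply min_eq_right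
    rw [div_le_iff₀ hhs]
    nlinarith
  rw [Gin, hmin]
  apply max_eq_right
  rw [le_div_iff₀ hhs]
  have := (div_le_iff₀ hd).mp h1
  nlinarith

lemma Gin_eq_one (hs μ h : ℝ) (hhs : 0 < hs) (hμ : 0 < μ)
    (h2 : h ≤ hs / (1 + μ * hs)) :
    Gin hs μ h = 1 := by
  have hd : (0:ℝ) < 1 + μ * hs := by nlinarith
  apply max_eq_left
  apply le_trans (min_le_right _ _)
  rw [div_le_one hhs]
  have := (le_div_iff₀ hd).mp h2
  nlinarith

lemma psi_eq (p : ℝ → ℝ) (hp_cont : ContinuousOn p (Ioi 0))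
    (hp_pos : ∀ h, 0 < h → 0 < p h)
    (hp_mean : IntegrableOn (fun h => h * p h) (Ioi (0 : ℝ)))
    (hs μ : ℝ) (hhs : 0 < hs) (hμ : 0 < μ) :
    Psi p hs μ = ∫ h in Ioi (0:ℝ), Gint hs μ h * p h := by
  set a := hs / (1 + μ * hs) with ha_def
  have hd : (0:ℝ) < 1 + μ * hs := by nlinarith
  have ha0 : 0 < a := by positivity
  have hahs : a < hs := by
    rw [ha_def, div_lt_iff₀ hd]
    nlinarith [mul_pos (mul_pos hμ hhs) hhs]
  have hint : IntegrableOn (fun h => Gint hs μ h * p h) (Ioi 0) :=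
    Gint_integrable p hp_cont hp_pos hp_mean hs μ hhs hμ
  -- split Ioi 0 = Ioc 0 a ∪ Ioi a
  have hsplit1 : (∫ h in Ioi (0:ℝ), Gint hs μ h * p h)
      = (∫ h in Ioc (0:ℝ) a, Gint hs μ h * p h) + ∫ h in Ioi a, Gint hs μ h * p h := by
    rw [← setIntegral_union (Ioc_disjoint_Ioi le_rfl) measurableSet_Ioi
      (hint.mono_set Ioc_subset_Ioi_self)
      (hint.mono_set (Ioi_subset_Ioi ha0.le)), Ioc_union_Ioi_eq_Ioi ha0.le]
  have hzero : (∫ h in Ioc (0:ℝ) a, Gint hs μ h * p h) = 0 := by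
    have heq : EqOn (fun h => Gint hs μ h * p h) (fun _ => (0:ℝ)) (Ioc 0 a) := by
      intro h hh
      simp only []
      rw [Gint, Gin_eq_one hs μ h hhs hμ hh.2, Real.log_one, zero_mul]
    rw [setIntegral_congr_fun measurableSet_Ioc heq, integral_zero]
  have hsplit2 : (∫ h in Ioi a, Gint hs μ h * p h)
      = (∫ h in Ioo a hs, Gint hs μ h * p h) + ∫ h in Ici hs, Gint hs μ h * p h := by
    rw [← setIntegral_union ((Iio_disjoint_Ici le_rfl).mono_left Ioo_subset_Iio_self)
      measurableSet_Ici
      (hint.mono_set (fun x hx => lt_trans ha0 hx.1))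
      (hint.mono_set (fun x hx => lt_of_lt_of_le hhs hx)),
      Ioo_union_Ici_eq_Ioi hahs]
  have hIci : (∫ h in Ici hs, Gint hs μ h * p h) = ∫ h in Ioi hs, Gint hs μ h * p h :=
    integral_Ici_eq_integral_Ioi
  have hmid : (∫ h in Ioo a hs, Gint hs μ h * p h)
      = ∫ h in Ioo a hs, Real.log (h * (1 + μ * hs) / hs) * p h := by
    apply setIntegral_congr_fun measurableSet_Ioo
    intro h hh
    simp only []
    rw [Gint, Gin_eq_mid hs μ h hhs hμ hh.1.le hh.2.le]
  have hright : (∫ h in Ioi hs, Gint hs μ h * p h)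
      = ∫ h in Ioi hs, Real.log (1 + μ * h) * p h := by
    apply setIntegral_congr_fun measurableSet_Ioi
    intro h hh
    simp only []
    rw [Gint, Gin_eq_right hs μ h hhs hμ (le_of_lt hh)]
  rw [Psi, hsplit1, hzero, hsplit2, hIci, hmid, hright]
  ring

/-- generic strict comparison of integrals over `(0,∞)`. -/
lemma sIntegral_lt (f g : ℝ → ℝ)
    (hf : IntegrableOn f (Ioi 0)) (hg : IntegrableOn g (Ioi 0))
    (hle : ∀ h ∈ Ioi (0:ℝ), f h ≤ g h)
    (a b : ℝ) (h0 : 0 < a) (hab : a < b)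
    (hlt : ∀ h ∈ Ioo a b, f h < g h) :
    (∫ h in Ioi (0:ℝ), f h) < ∫ h in Ioi (0:ℝ), g h := by
  have key : 0 < ∫ h in Ioi (0:ℝ), (g h - f h) := by
    have hgf : IntegrableOn (g - f) (Ioi 0) := hg.sub hf
    have : (∫ h in Ioi (0:ℝ), (g h - f h)) = ∫ h in Ioi (0:ℝ), (g - f) h := rfl
    rw [this, setIntegral_pos_iff_support_of_nonneg_ae ?nn hgf]
    case nn =>
      filter_upwards [ae_restrict_mem measurableSet_Ioi] with h hh
      simp only [Pi.zero_apply, Pi.sub_apply, sub_nonneg]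
      exact hle h hh
    have hsub : Ioo a b ⊆ Function.support (g - f) ∩ Ioi 0 := by
      intro h hh
      exact ⟨fun hc => (sub_ne_zero.mpr (ne_of_gt (hlt h hh))) hc, lt_trans h0 hh.1⟩
    calc (0:ENNReal) < volume (Ioo a b) := by
          rw [Real.volume_Ioo]
          simpa using sub_pos.mpr hab
      _ ≤ _ := measure_mono hsub
  have hdiff : (∫ h in Ioi (0:ℝ), (g h - f h))
      = (∫ h in Ioi (0:ℝ), g h) - ∫ h in Ioi (0:ℝ), f h := integral_sub hg hf
  linarith [hdiff ▸ key]

section Mono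
variable (p : ℝ → ℝ) (hp_cont : ContinuousOn p (Ioi 0))
  (hp_pos : ∀ h, 0 < h → 0 < p h) (hp_int : IntegrableOn p (Ioi (0 : ℝ)))
  (hp_mean : IntegrableOn (fun h => h * p h) (Ioi (0 : ℝ)))

include hp_cont hp_pos hp_int in
lemma phi_anti_h (h₁ h₂ μ : ℝ) (hh₁ : 0 < h₁) (hh₂ : h₁ < h₂) (hμ : 0 < μ) :
    Phi p h₂ μ < Phi p h₁ μ := by
  have hh₂0 : 0 < h₂ := lt_trans hh₁ hh₂
  rw [phi_eq p hp_cont hp_pos hp_int h₁ μ hh₁ hμ,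
    phi_eq p hp_cont hp_pos hp_int h₂ μ hh₂0 hμ]
  refine sIntegral_lt _ _ (Fint_integrable p hp_cont hp_pos hp_int h₂ μ hh₂0 hμ)
    (Fint_integrable p hp_cont hp_pos hp_int h₁ μ hh₁ hμ) ?_ h₁ h₂ hh₁ hh₂ ?_
  · intro h hh
    have hh0 : (0:ℝ) < h := hh
    have hD : (0:ℝ) < 1 + μ * h := by nlinarith
    apply mul_le_mul_of_nonneg_right _ (hp_pos h hh0).le
    rcases le_total h h₂ with hc | hc
    · rw [show Fint h₂ μ h = 0 by rw [Fint, max_eq_left (by linarith), zero_div]]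
      exact Fint_nonneg _ _ _ hh₁ hμ hh0
    · unfold Fint
      rw [max_eq_right (by linarith), max_eq_right (by linarith),
        div_le_div_iff₀ (by nlinarith [mul_pos hh₂0 (mul_pos hμ hh0)]) (by nlinarith [mul_pos hh₁ (mul_pos hμ hh0)])]
      nlinarith [mul_nonneg (mul_nonneg hD.le hh0.le) (sub_pos.mpr hh₂).le]
  · intro h hh
    obtain ⟨hl, hr⟩ := hh
    have hh0 : (0:ℝ) < h := lt_trans hh₁ hl
    have hD : (0:ℝ) < 1 + μ * h := by nlinarith
    apply mul_lt_mul_of_pos_right _ (hp_pos h hh0)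
    rw [show Fint h₂ μ h = 0 by rw [Fint, max_eq_left (by linarith), zero_div],
      Fint, max_eq_right (by linarith)]
    exact div_pos (by linarith) (mul_pos hh₁ hD)

include hp_cont hp_pos hp_int in
lemma phi_anti_mu (hs μ₁ μ₂ : ℝ) (hhs : 0 < hs) (hμ₁ : 0 < μ₁) (hμ₂ : μ₁ < μ₂) :
    Phi p hs μ₂ < Phi p hs μ₁ := by
  have hμ₂0 : 0 < μ₂ := lt_trans hμ₁ hμ₂
  rw [phi_eq p hp_cont hp_pos hp_int hs μ₁ hhs hμ₁,
    phi_eq p hp_cont hp_pos hp_int hs μ₂ hhs hμ₂0]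
  refine sIntegral_lt _ _ (Fint_integrable p hp_cont hp_pos hp_int hs μ₂ hhs hμ₂0)
    (Fint_integrable p hp_cont hp_pos hp_int hs μ₁ hhs hμ₁) ?_ hs (hs + 1) hhs (by linarith) ?_
  · intro h hh
    have hh0 : (0:ℝ) < h := hh
    apply mul_le_mul_of_nonneg_right _ (hp_pos h hh0).le
    have hD1 : (0:ℝ) < hs * (1 + μ₁ * h) := by nlinarith [mul_pos hμ₁ hh0]
    have hD2 : (0:ℝ) < hs * (1 + μ₂ * h) := by nlinarith [mul_pos hμ₂0 hh0]
    unfold Fint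
    rw [div_le_div_iff₀ hD2 hD1]
    exact mul_le_mul_of_nonneg_left (by nlinarith [mul_nonneg (mul_nonneg hhs.le hh0.le) (sub_pos.mpr hμ₂).le]) (le_max_left _ _)
  · intro h hh
    obtain ⟨hl, _⟩ := hh
    have hh0 : (0:ℝ) < h := lt_trans hhs hl
    apply mul_lt_mul_of_pos_right _ (hp_pos h hh0)
    unfold Fint
    rw [max_eq_right (by linarith)]
    apply div_lt_div_of_pos_left (by linarith) (by nlinarith [mul_pos hμ₁ hh0, mul_pos hhs (mul_pos hμ₁ hh0)]) (by nlinarith [mul_pos hhs (mul_pos (sub_pos.mpr hμ₂) hh0)])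

include hp_cont hp_pos hp_mean in
lemma psi_mono_mu (hs μ₁ μ₂ : ℝ) (hhs : 0 < hs) (hμ₁ : 0 < μ₁) (hμ₂ : μ₁ < μ₂) :
    Psi p hs μ₁ < Psi p hs μ₂ := by
  have hμ₂0 : 0 < μ₂ := lt_trans hμ₁ hμ₂
  rw [psi_eq p hp_cont hp_pos hp_mean hs μ₁ hhs hμ₁,
    psi_eq p hp_cont hp_pos hp_mean hs μ₂ hhs hμ₂0]
  refine sIntegral_lt _ _ (Gint_integrable p hp_cont hp_pos hp_mean hs μ₁ hhs hμ₁)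
    (Gint_integrable p hp_cont hp_pos hp_mean hs μ₂ hhs hμ₂0) ?_ hs (hs + 1) hhs (by linarith) ?_
  · intro h hh
    have hh0 : (0:ℝ) < h := hh
    apply mul_le_mul_of_nonneg_right _ (hp_pos h hh0).le
    apply Real.log_le_log (Gin_pos _ _ _)
    apply max_le_max le_rfl
    apply min_le_min (by nlinarith)
    gcongr

  · intro h hh
    obtain ⟨hl, _⟩ := hh
    have hh0 : (0:ℝ) < h := lt_trans hhs hl
    apply mul_lt_mul_of_pos_right _ (hp_pos h hh0)
    rw [Gint, Gint, Gin_eq_right hs μ₁ h hhs hμ₁ hl.le, Gin_eq_right hs μ₂ h hhs hμ₂0 hl.le]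
    apply Real.log_lt_log (by nlinarith)
    nlinarith

include hp_cont hp_pos hp_mean in
lemma psi_anti_h (h₁ h₂ μ : ℝ) (hh₁ : 0 < h₁) (hh₂ : h₁ < h₂) (hμ : 0 < μ) :
    Psi p h₂ μ < Psi p h₁ μ := by
  have hh₂0 : 0 < h₂ := lt_trans hh₁ hh₂
  rw [psi_eq p hp_cont hp_pos hp_mean h₁ μ hh₁ hμ,
    psi_eq p hp_cont hp_pos hp_mean h₂ μ hh₂0 hμ]
  refine sIntegral_lt _ _ (Gint_integrable p hp_cont hp_pos hp_mean h₂ μ hh₂0 hμ)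
    (Gint_integrable p hp_cont hp_pos hp_mean h₁ μ hh₁ hμ) ?_ h₁ h₂ hh₁ hh₂ ?_
  · intro h hh
    have hh0 : (0:ℝ) < h := hh
    apply mul_le_mul_of_nonneg_right _ (hp_pos h hh0).le
    apply Real.log_le_log (Gin_pos _ _ _)
    apply max_le_max le_rfl
    apply min_le_min le_rfl
    rw [div_le_div_iff₀ hh₂0 hh₁]
    nlinarith
  · intro h hh
    obtain ⟨hl, hr⟩ := hh
    have hh0 : (0:ℝ) < h := lt_trans hh₁ hl
    apply mul_lt_mul_of_pos_right _ (hp_pos h hh0)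
    rw [Gint, Gint, Gin_eq_right h₁ μ h hh₁ hμ hl.le]
    apply Real.log_lt_log (Gin_pos _ _ _)
    apply max_lt (by nlinarith)
    apply lt_of_le_of_lt (min_le_right _ _)
    rw [div_lt_iff₀ hh₂0]
    nlinarith

end Mono

/-- for every `J_M > 0` and `R > 0` there is at most one pair
`(h*, μ) ∈ (0,∞) × (0,∞)` with `Φ(h*, μ) = J_M/σ²` and `Ψ(h*, μ) = R`. -/
theorem stmt4
    (p : ℝ → ℝ) (σ : ℝ) (hσ : 0 < σ)
    (hp_cont : ContinuousOn p (Ioi 0)) (hp_pos : ∀ h, 0 < h → 0 < p h)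
    (hp_int : IntegrableOn p (Ioi (0 : ℝ))) (hp_one : (∫ h in Ioi (0 : ℝ), p h) = 1)
    (hp_mean : IntegrableOn (fun h => h * p h) (Ioi (0 : ℝ)))
    (JM R : ℝ) (hJM : 0 < JM) (hR : 0 < R)
    (h₁ μ₁ h₂ μ₂ : ℝ) (hh₁ : 0 < h₁) (hμ₁ : 0 < μ₁) (hh₂ : 0 < h₂) (hμ₂ : 0 < μ₂)
    (hΦ₁ : Phi p h₁ μ₁ = JM / σ) (hΨ₁ : Psi p h₁ μ₁ = R)
    (hΦ₂ : Phi p h₂ μ₂ = JM / σ) (hΨ₂ : Psi p h₂ μ₂ = R) :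
    h₁ = h₂ ∧ μ₁ = μ₂ := by
  have key : ∀ a b c d : ℝ, 0 < a → 0 < b → 0 < c → 0 < d → a < c →
      Phi p a b = Phi p c d → Psi p a b = Psi p c d → False := by
    intro a b c d ha hb hc hd hac hP hS
    have hbd : b < d := by
      by_contra hcon
      push_neg at hcon
      rcases lt_or_eq_of_le hcon with hlt | heq
      · have t1 : Psi p c d < Psi p c b :=
          psi_mono_mu p hp_cont hp_pos hp_mean c d b hc hd hlt
        have t2 : Psi p c b < Psi p a b :=
          psi_anti_h p hp_cont hp_pos hp_mean a c b ha hac hb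
        linarith
      · subst heq
        have t2 : Psi p c d < Psi p a d :=
          psi_anti_h p hp_cont hp_pos hp_mean a c d ha hac hd
        linarith
    have t3 : Phi p c d < Phi p c b :=
      phi_anti_mu p hp_cont hp_pos hp_int c b d hc hb hbd
    have t4 : Phi p c b < Phi p a b :=
      phi_anti_h p hp_cont hp_pos hp_int a c b ha hac hb
    linarith
  have hh : h₁ = h₂ := by
    rcases lt_trichotomy h₁ h₂ with hlt | he | hgt
    · exact (key h₁ μ₁ h₂ μ₂ hh₁ hμ₁ hh₂ hμ₂ hlt (hΦ₁.trans hΦ₂.symm)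
        (hΨ₁.trans hΨ₂.symm)).elim
    · exact he
    · exact (key h₂ μ₂ h₁ μ₁ hh₂ hμ₂ hh₁ hμ₁ hgt (hΦ₂.trans hΦ₁.symm)
        (hΨ₂.trans hΨ₁.symm)).elim
  refine ⟨hh, ?_⟩
  subst hh
  rcases lt_trichotomy μ₁ μ₂ with hlt | he | hgt
  · have := phi_anti_mu p hp_cont hp_pos hp_int h₁ μ₁ μ₂ hh₁ hμ₁ hlt
    rw [hΦ₁, hΦ₂] at this; linarith
  · exact he
  · have := phi_anti_mu p hp_cont hp_pos hp_int h₁ μ₂ μ₁ hh₁ hμ₂ hgt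
    rw [hΦ₁, hΦ₂] at this; linarith
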